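/- Let d ∈ ℂ and suppose d is not a real number lying in the closed interval [−4, 0]. Then there exists exactly one λ ∈ ℂ with |λ| < 1 satisfying λ² − (2 + d)·λ + 1 = 0. -/

import Mathlib

open Complex

/-- If `d` is not a real number in `[−4, 0]`, the quadratic `λ² − (2+d)λ + 1 = 0`
has exactly one root of modulus less than one. -/
theorem stmt_12 (d : ℂ) (hd : ¬ ∃ r : ℝ, r ∈ Set.Icc (-4 : ℝ) 0 ∧ d = (r : ℂ)) :
    ∃! l : ℂ, ‖l‖ < 1 ∧ l ^ 2 - (2 + d) * l + 1 = 0 := by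
  set c := 2 + d with hc
  obtain ⟨w, hw⟩ := IsAlgClosed.exists_pow_nat_eq (c ^ 2 - 4) (n := 2) (by norm_num)
  set a := (c + w) / 2 with ha
  set b := (c - w) / 2 with hb
  have hab : a * b = 1 := by
    have : (c + w) * (c - w) = 4 := by linear_combination -hw
    rw [ha, hb]
    field_simp
    linear_combination this
  have hsum : a + b = c := by rw [ha, hb]; ring
  have hfact : ∀ x : ℂ, x ^ 2 - c * x + 1 = (x - a) * (x - b) := by
    intro x
    have : (x - a) * (x - b) = x ^ 2 - (a + b) * x + a * b := by ring
    rw [this, hsum, hab]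
  -- no root has modulus exactly 1
  have hmod : ∀ x : ℂ, x ^ 2 - c * x + 1 = 0 → ‖x‖ ≠ 1 := by
    intro x hx h1
    apply hd
    have hx0 : x ≠ 0 := by
      intro h; rw [h] at h1; simp at h1
    have hns : Complex.normSq x = 1 := by
      have := Complex.sq_norm x
      rw [h1] at this; simpa using this.symm
    have hconj : x * (starRingEnd ℂ) x = 1 := by
      rw [Complex.mul_conj, hns]; norm_num
    have hcx : c = x + (starRingEnd ℂ) x := by
      have hinv : (starRingEnd ℂ) x = x⁻¹ := by
        field_simp
        linear_combination hconj
      rw [hinv]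
      field_simp
      linear_combination -hx
    have hre : c = ((2 * x.re : ℝ) : ℂ) := by
      rw [hcx, Complex.add_conj]
    refine ⟨2 * x.re - 2, ?_, ?_⟩
    · have hre1 : |x.re| ≤ 1 := by
        have := Complex.abs_re_le_norm x
        rwa [h1] at this
      constructor
      · nlinarith [abs_le.mp hre1]
      · nlinarith [abs_le.mp hre1]
    · have : d = c - 2 := by rw [hc]; ring
      rw [this, hre]; push_cast; ring
  have haroot : a ^ 2 - c * a + 1 = 0 := by rw [hfact]; ring
  have hbroot : b ^ 2 - c * b + 1 = 0 := by rw [hfact]; ring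
  have ha0 : a ≠ 0 := fun h => by simp [h] at hab
  have habsab : ‖a‖ * ‖b‖ = 1 := by
    rw [← norm_mul, hab]; simp
  have hane : ‖a‖ ≠ 1 := hmod a haroot
  rcases lt_or_gt_of_ne hane with hlt | hgt
  · refine ⟨a, ⟨hlt, haroot⟩, ?_⟩
    rintro y ⟨hy1, hy2⟩
    have : (y - a) * (y - b) = 0 := by rw [← hfact]; exact hy2
    rcases mul_eq_zero.mp this with h | h
    · exact sub_eq_zero.mp h
    · exfalso
      have hy : y = b := sub_eq_zero.mp h
      have : ‖b‖ > 1 := by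
        by_contra hle
        push_neg at hle
        nlinarith [norm_nonneg a, norm_nonneg b]
      rw [hy] at hy1; linarith
  · have hblt : ‖b‖ < 1 := by
      by_contra hle
      push_neg at hle
      nlinarith [norm_nonneg a]
    refine ⟨b, ⟨hblt, hbroot⟩, ?_⟩
    rintro y ⟨hy1, hy2⟩
    have : (y - a) * (y - b) = 0 := by rw [← hfact]; exact hy2
    rcases mul_eq_zero.mp this with h | h
    · exfalso
      have hy : y = a := sub_eq_zero.mp h
      rw [hy] at hy1; linarith
    · exact sub_eq_zero.mp h
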